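/- Let K = 2^m for a natural number m ≥ 1. For every a ∈ ℝ^{K−1} with a_i > 0 for all i, the inequality (K−1)·b̄(a) ≤ Σ_{i=1}^{K−1} b_i(a) holds, with equality if and only if a is proportional to 1_{K−1}. Consequently, along any solution of the reduced cross-entropy gradient flow da_i/dt = a_i b_i(a)/D(a) with positive initialization, the Kullback–Leibler divergence D_KL((1/(K−1))·1_{K−1} ‖ â(t)) = −log(K−1) − (1/(K−1))·Σ_i log(â_i(t)) has nonpositive time derivative, vanishing only when â(t) = (1/(K−1))·1_{K−1}. -/

import Mathlib

open Matrix Finset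

noncomputable section

/-- The Sylvester Hadamard matrix `Φ_{2^m}`, defined recursively by `Φ₁ = (1)` and
`Φ_{2^{m+1}} = [[Φ_{2^m}, Φ_{2^m}], [Φ_{2^m}, -Φ_{2^m}]]`. -/
def sylvester : (m : ℕ) → Matrix (Fin (2 ^ m)) (Fin (2 ^ m)) ℝ
  | 0 => Matrix.of fun _ _ => 1
  | m + 1 => Matrix.of fun i j =>
      (if 2 ^ m ≤ i.val ∧ 2 ^ m ≤ j.val then -1 else 1) *
        sylvester m ⟨i.val % 2 ^ m, Nat.mod_lt _ (Nat.two_pow_pos m)⟩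
          ⟨j.val % 2 ^ m, Nat.mod_lt _ (Nat.two_pow_pos m)⟩

/-- The core `X = Φ[2:K, 2:K]` obtained by deleting the first row and column of `Φ`. -/
def hadCore (m : ℕ) : Matrix (Fin (2 ^ m - 1)) (Fin (2 ^ m - 1)) ℝ :=
  Matrix.of fun i j =>
    sylvester m ⟨i.val + 1, by have h1 := Nat.two_pow_pos m; have h2 := i.isLt; omega⟩
      ⟨j.val + 1, by have h1 := Nat.two_pow_pos m; have h2 := j.isLt; omega⟩

/-- `Ψ = 1 1ᵀ − X`. -/
def PsiM (m : ℕ) : Matrix (Fin (2 ^ m - 1)) (Fin (2 ^ m - 1)) ℝ :=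
  Matrix.of fun i j => 1 - hadCore m i j

/-- `b_i(a) = Σ_j Ψ_{ij} exp(−(Ψa)_j)`. -/
def bVec (m : ℕ) (a : Fin (2 ^ m - 1) → ℝ) (i : Fin (2 ^ m - 1)) : ℝ :=
  ∑ j, PsiM m i j * Real.exp (-((PsiM m).mulVec a j))

/-- `D(a) = 1 + Σ_j exp(−(Ψa)_j)`. -/
def Dden (m : ℕ) (a : Fin (2 ^ m - 1) → ℝ) : ℝ :=
  1 + ∑ j, Real.exp (-((PsiM m).mulVec a j))

/-- The energy `E(a) = log(1 + Σ_j exp(−(Ψa)_j))`. -/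
def energyE (m : ℕ) (a : Fin (2 ^ m - 1) → ℝ) : ℝ :=
  Real.log (1 + ∑ j, Real.exp (-((PsiM m).mulVec a j)))

/-- `b̄(a) = Σ_j â_j b_j(a)` with `â = a / ‖a‖₁`. -/
def bbar (m : ℕ) (a : Fin (2 ^ m - 1) → ℝ) : ℝ :=
  ∑ j, (a j / ∑ k, a k) * bVec m a j

/-- `M(a) = (1/2) Σ_i (â_i − 1/(K−1))²`. -/
def Mmetric (m : ℕ) (a : Fin (2 ^ m - 1) → ℝ) : ℝ :=
  (1 / 2) * ∑ i, (a i / (∑ k, a k) - 1 / ((2 : ℝ) ^ m - 1)) ^ 2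

/-- The KL divergence `D_KL((1/(K−1))·1 ‖ â) = −log(K−1) − (1/(K−1)) Σ_i log(â_i)`. -/
def klUnif (m : ℕ) (a : Fin (2 ^ m - 1) → ℝ) : ℝ :=
  -Real.log ((2 : ℝ) ^ m - 1) -
    (1 / ((2 : ℝ) ^ m - 1)) * ∑ i, Real.log (a i / ∑ j, a j)



lemma sylvester_succ_apply (m : ℕ) (i j : Fin (2 ^ (m+1))) :
    sylvester (m+1) i j =
      (if 2 ^ m ≤ i.val ∧ 2 ^ m ≤ j.val then -1 else 1) *
        sylvester m ⟨i.val % 2 ^ m, Nat.mod_lt _ (Nat.two_pow_pos m)⟩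
          ⟨j.val % 2 ^ m, Nat.mod_lt _ (Nat.two_pow_pos m)⟩ := rfl

lemma sylvester_symm (m : ℕ) (i j : Fin (2 ^ m)) :
    sylvester m i j = sylvester m j i := by
  induction m with
  | zero => rfl
  | succ m ih =>
    rw [sylvester_succ_apply, sylvester_succ_apply, ih]
    congr 1
    simp only [and_comm]

lemma sylvester_col0 (m : ℕ) (i : Fin (2 ^ m)) :
    sylvester m i ⟨0, Nat.two_pow_pos m⟩ = 1 := by
  induction m with
  | zero => rfl
  | succ m ih =>
    rw [sylvester_succ_apply]
    have h0 : ¬ (2 ^ m ≤ i.val ∧ 2 ^ m ≤ (⟨0, Nat.two_pow_pos (m+1)⟩ : Fin (2^(m+1))).val) := by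
      simp [Nat.two_pow_pos m]
    rw [if_neg h0, one_mul]
    have : (⟨(⟨0, Nat.two_pow_pos (m+1)⟩ : Fin (2^(m+1))).val % 2 ^ m, Nat.mod_lt _ (Nat.two_pow_pos m)⟩ : Fin (2^m)) = ⟨0, Nat.two_pow_pos m⟩ := by
      apply Fin.ext; simp
    rw [this, ih]

lemma sylvester_row0 (m : ℕ) (j : Fin (2 ^ m)) :
    sylvester m ⟨0, Nat.two_pow_pos m⟩ j = 1 := by
  rw [sylvester_symm]; exact sylvester_col0 m j

lemma sylvester_ortho (m : ℕ) (i j : Fin (2 ^ m)) :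
    ∑ k, sylvester m k i * sylvester m k j = if i = j then (2:ℝ)^m else 0 := by
  induction m with
  | zero =>
    have : i = j := Fin.ext (by omega)
    simp [sylvester, this]
  | succ m ih =>
    have hcast : 2 ^ m + 2 ^ m = 2 ^ (m+1) := by ring
    set e : Fin (2^m) ⊕ Fin (2^m) ≃ Fin (2^(m+1)) :=
      finSumFinEquiv.trans (finCongr hcast) with he
    have hsum := Fintype.sum_equiv e
      (fun x => sylvester (m+1) (e x) i * sylvester (m+1) (e x) j)
      (fun k => sylvester (m+1) k i * sylvester (m+1) k j) (fun x => rfl)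
    rw [← hsum, Fintype.sum_sum_type]
    have hinl : ∀ k : Fin (2^m), ((e (Sum.inl k) : Fin (2^(m+1))) : ℕ) = k.val := by
      intro k; simp [he, finCongr]
    have hinr : ∀ k : Fin (2^m), ((e (Sum.inr k) : Fin (2^(m+1))) : ℕ) = 2^m + k.val := by
      intro k; simp [he, finCongr, Nat.add_comm]
    set i' : Fin (2^m) := ⟨i.val % 2^m, Nat.mod_lt _ (Nat.two_pow_pos m)⟩ with hi'
    set j' : Fin (2^m) := ⟨j.val % 2^m, Nat.mod_lt _ (Nat.two_pow_pos m)⟩ with hj'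
    have hlo : ∀ k : Fin (2^m),
        sylvester (m+1) (e (Sum.inl k)) i = sylvester m k i' := by
      intro k
      rw [sylvester_succ_apply]
      have hcond : ¬ (2^m ≤ ((e (Sum.inl k) : Fin (2^(m+1))) : ℕ) ∧ 2^m ≤ i.val) := by
        rw [hinl]; intro ⟨h1, _⟩; exact absurd h1 (by omega)
      rw [if_neg hcond, one_mul, ← hi']
      have hk : (⟨((e (Sum.inl k) : Fin (2^(m+1))) : ℕ) % 2 ^ m, Nat.mod_lt _ (Nat.two_pow_pos m)⟩ : Fin (2^m)) = k := by
        apply Fin.ext; simp [hinl k, Nat.mod_eq_of_lt k.isLt]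
      rw [hk]
    have hhi : ∀ k : Fin (2^m),
        sylvester (m+1) (e (Sum.inr k)) i = (if 2^m ≤ i.val then -1 else 1) * sylvester m k i' := by
      intro k
      rw [sylvester_succ_apply]
      have h1 : (2^m ≤ ((e (Sum.inr k) : Fin (2^(m+1))) : ℕ) ∧ 2^m ≤ i.val) ↔ 2^m ≤ i.val := by
        rw [hinr]; exact ⟨fun h => h.2, fun h => ⟨by omega, h⟩⟩
      rw [if_congr h1 rfl rfl, ← hi']
      have hk : (⟨((e (Sum.inr k) : Fin (2^(m+1))) : ℕ) % 2 ^ m, Nat.mod_lt _ (Nat.two_pow_pos m)⟩ : Fin (2^m)) = k := by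
        apply Fin.ext
        simp [hinr k, Nat.add_mod_left, Nat.mod_eq_of_lt k.isLt]
      rw [hk]
    have hloj : ∀ k : Fin (2^m),
        sylvester (m+1) (e (Sum.inl k)) j = sylvester m k j' := by
      intro k
      rw [sylvester_succ_apply]
      have hcond : ¬ (2^m ≤ ((e (Sum.inl k) : Fin (2^(m+1))) : ℕ) ∧ 2^m ≤ j.val) := by
        rw [hinl]; intro ⟨h1, _⟩; exact absurd h1 (by omega)
      rw [if_neg hcond, one_mul, ← hj']
      have hk : (⟨((e (Sum.inl k) : Fin (2^(m+1))) : ℕ) % 2 ^ m, Nat.mod_lt _ (Nat.two_pow_pos m)⟩ : Fin (2^m)) = k := by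
        apply Fin.ext; simp [hinl k, Nat.mod_eq_of_lt k.isLt]
      rw [hk]
    have hhij : ∀ k : Fin (2^m),
        sylvester (m+1) (e (Sum.inr k)) j = (if 2^m ≤ j.val then -1 else 1) * sylvester m k j' := by
      intro k
      rw [sylvester_succ_apply]
      have h1 : (2^m ≤ ((e (Sum.inr k) : Fin (2^(m+1))) : ℕ) ∧ 2^m ≤ j.val) ↔ 2^m ≤ j.val := by
        rw [hinr]; exact ⟨fun h => h.2, fun h => ⟨by omega, h⟩⟩
      rw [if_congr h1 rfl rfl, ← hj']
      have hk : (⟨((e (Sum.inr k) : Fin (2^(m+1))) : ℕ) % 2 ^ m, Nat.mod_lt _ (Nat.two_pow_pos m)⟩ : Fin (2^m)) = k := by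
        apply Fin.ext
        simp [hinr k, Nat.add_mod_left, Nat.mod_eq_of_lt k.isLt]
      rw [hk]
    have e1 : ∑ k : Fin (2^m), sylvester (m+1) (e (Sum.inl k)) i * sylvester (m+1) (e (Sum.inl k)) j
        = if i' = j' then (2:ℝ)^m else 0 := by
      rw [← ih i' j']; exact Finset.sum_congr rfl (fun k _ => by rw [hlo k, hloj k])
    have e2 : ∑ k : Fin (2^m), sylvester (m+1) (e (Sum.inr k)) i * sylvester (m+1) (e (Sum.inr k)) j
        = ((if 2^m ≤ i.val then -1 else 1) * (if 2^m ≤ j.val then -1 else 1)) *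
          (if i' = j' then (2:ℝ)^m else 0) := by
      rw [← ih i' j', Finset.mul_sum]
      exact Finset.sum_congr rfl (fun k _ => by rw [hhi k, hhij k]; ring)
    rw [e1, e2]
    have hij : i = j ↔ (i' = j' ∧ (2^m ≤ i.val ↔ 2^m ≤ j.val)) := by
      have h2m : (2:ℕ)^(m+1) = 2^m + 2^m := by ring
      have hi2 : i.val < 2^m + 2^m := by rw [← h2m]; exact i.isLt
      have hj2 : j.val < 2^m + 2^m := by rw [← h2m]; exact j.isLt
      have hmi : (2^m ≤ i.val ∧ i.val % 2^m = i.val - 2^m) ∨ (i.val < 2^m ∧ i.val % 2^m = i.val) := by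
        by_cases h : 2^m ≤ i.val
        · exact Or.inl ⟨h, by rw [Nat.mod_eq_sub_mod h, Nat.mod_eq_of_lt (by omega)]⟩
        · exact Or.inr ⟨by omega, Nat.mod_eq_of_lt (by omega)⟩
      have hmj : (2^m ≤ j.val ∧ j.val % 2^m = j.val - 2^m) ∨ (j.val < 2^m ∧ j.val % 2^m = j.val) := by
        by_cases h : 2^m ≤ j.val
        · exact Or.inl ⟨h, by rw [Nat.mod_eq_sub_mod h, Nat.mod_eq_of_lt (by omega)]⟩
        · exact Or.inr ⟨by omega, Nat.mod_eq_of_lt (by omega)⟩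
      simp only [hi', hj', Fin.ext_iff]
      rcases hmi with ⟨h1, h2⟩ | ⟨h1, h2⟩ <;> rcases hmj with ⟨h3, h4⟩ | ⟨h3, h4⟩ <;>
        simp only [h2, h4] <;> omega
    by_cases hii : 2^m ≤ i.val <;> by_cases hjj : 2^m ≤ j.val
    · have h2 : i = j ↔ i' = j' := by rw [hij]; simp [hii, hjj]
      rw [if_pos hii, if_pos hjj]
      by_cases h : i' = j'
      · rw [if_pos h, if_pos (h2.mpr h)]; push_cast; ring
      · rw [if_neg h, if_neg (fun hh => h (h2.mp hh))]; ring
    · have hne : i ≠ j := by simp only [ne_eq, hij]; tauto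
      rw [if_pos hii, if_neg hjj, if_neg hne]; ring
    · have hne : i ≠ j := by simp only [ne_eq, hij]; tauto
      rw [if_neg hii, if_pos hjj, if_neg hne]; ring
    · have h2 : i = j ↔ i' = j' := by rw [hij]; simp [hii, hjj]
      rw [if_neg hii, if_neg hjj]
      by_cases h : i' = j'
      · rw [if_pos h, if_pos (h2.mpr h)]; push_cast; ring
      · rw [if_neg h, if_neg (fun hh => h (h2.mp hh))]; ring


/-- Shift a `Fin (2^m - 1)` index into `Fin (2^m)`. -/
def shf (m : ℕ) (i : Fin (2 ^ m - 1)) : Fin (2 ^ m) :=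
  ⟨i.val + 1, by have h1 := Nat.two_pow_pos m; have h2 := i.isLt; omega⟩

lemma hadCore_apply (m : ℕ) (i j : Fin (2 ^ m - 1)) :
    hadCore m i j = sylvester m (shf m i) (shf m j) := rfl

lemma sum_shift (m : ℕ) (hm : 1 ≤ m) (f : Fin (2 ^ m) → ℝ) :
    ∑ j : Fin (2 ^ m - 1), f (shf m j) = (∑ j, f j) - f ⟨0, Nat.two_pow_pos m⟩ := by
  have h2m : 2 ≤ 2 ^ m := by
    calc 2 = 2 ^ 1 := rfl
    _ ≤ 2 ^ m := Nat.pow_le_pow_right (by norm_num) hm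
  have h0 : (⟨0, Nat.two_pow_pos m⟩ : Fin (2 ^ m)) ∈ (univ : Finset (Fin (2 ^ m))) :=
    mem_univ _
  rw [eq_sub_iff_add_eq, ← Finset.add_sum_erase univ f h0, add_comm]
  congr 1
  refine Finset.sum_nbij' (fun j => shf m j)
    (fun j => ⟨j.val - 1, by have h2 := j.isLt; omega⟩) ?_ ?_ ?_ ?_ ?_
  · intro j _
    apply Finset.mem_erase.mpr
    refine ⟨?_, mem_univ _⟩
    intro h
    have := congrArg Fin.val h
    simp [shf] at this
  · intro j _; exact mem_univ _
  · intro j _; apply Fin.ext; simp [shf]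
  · intro j hj
    apply Fin.ext
    have h3 : j.val ≠ 0 := by
      intro h
      exact (Finset.mem_erase.mp hj).1 (Fin.ext h)
    simp [shf]
    omega
  · intro j _; rfl

lemma psi_symm (m : ℕ) (i j : Fin (2 ^ m - 1)) : PsiM m i j = PsiM m j i := by
  simp only [PsiM, Matrix.of_apply, hadCore_apply, sylvester_symm]

lemma core_colsum (m : ℕ) (hm : 1 ≤ m) (j : Fin (2 ^ m - 1)) :
    ∑ i : Fin (2 ^ m - 1), hadCore m i j = -1 := by
  rw [show (∑ i : Fin (2 ^ m - 1), hadCore m i j)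
      = ∑ i : Fin (2 ^ m - 1), (fun k : Fin (2 ^ m) => sylvester m k (shf m j)) (shf m i) from rfl,
    sum_shift m hm (fun k : Fin (2 ^ m) => sylvester m k (shf m j))]
  have h2 : ∑ k : Fin (2 ^ m), sylvester m k (shf m j) = 0 := by
    have := sylvester_ortho m (shf m j) ⟨0, Nat.two_pow_pos m⟩
    have hne : shf m j ≠ ⟨0, Nat.two_pow_pos m⟩ := by
      intro h; have := congrArg Fin.val h; simp [shf] at this
    rw [if_neg hne] at this
    rw [← this]
    apply Finset.sum_congr rfl
    intro k _
    rw [sylvester_col0 m k, mul_one]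
  rw [h2, sylvester_row0 m (shf m j)]
  ring

lemma core_rowsum (m : ℕ) (hm : 1 ≤ m) (i : Fin (2 ^ m - 1)) :
    ∑ j : Fin (2 ^ m - 1), hadCore m i j = -1 := by
  have h : ∑ j : Fin (2 ^ m - 1), hadCore m i j = ∑ j : Fin (2 ^ m - 1), hadCore m j i :=
    Finset.sum_congr rfl (fun j _ => by
      rw [hadCore_apply, sylvester_symm, ← hadCore_apply])
  rw [h]
  exact core_colsum m hm i

lemma card_real (m : ℕ) (hm : 1 ≤ m) :
    ((Fintype.card (Fin (2 ^ m - 1)) : ℝ)) = (2:ℝ)^m - 1 := by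
  rw [Fintype.card_fin]
  have h1 : (1:ℕ) ≤ 2 ^ m := Nat.one_le_two_pow
  push_cast [h1]
  ring

lemma psi_rowsum (m : ℕ) (hm : 1 ≤ m) (i : Fin (2 ^ m - 1)) :
    ∑ j : Fin (2 ^ m - 1), PsiM m i j = (2:ℝ)^m := by
  simp only [PsiM, Matrix.of_apply]
  rw [Finset.sum_sub_distrib, core_rowsum m hm i, Finset.sum_const, nsmul_eq_mul, mul_one,
    ← Fintype.card, card_real m hm]
  ring

lemma psi_colsum (m : ℕ) (hm : 1 ≤ m) (j : Fin (2 ^ m - 1)) :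
    ∑ i : Fin (2 ^ m - 1), PsiM m i j = (2:ℝ)^m := by
  rw [Finset.sum_congr rfl (fun i _ => psi_symm m i j)]
  exact psi_rowsum m hm j

lemma core_ortho (m : ℕ) (hm : 1 ≤ m) (i j : Fin (2 ^ m - 1)) :
    ∑ k : Fin (2 ^ m - 1), hadCore m k i * hadCore m k j =
      (if i = j then (2:ℝ)^m else 0) - 1 := by
  rw [show (∑ k : Fin (2 ^ m - 1), hadCore m k i * hadCore m k j)
      = ∑ k : Fin (2 ^ m - 1),
        (fun l : Fin (2 ^ m) => sylvester m l (shf m i) * sylvester m l (shf m j)) (shf m k) from rfl,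
    sum_shift m hm (fun l : Fin (2 ^ m) => sylvester m l (shf m i) * sylvester m l (shf m j)),
    sylvester_ortho m,
    sylvester_row0 m, sylvester_row0 m, mul_one]
  congr 1
  have : shf m i = shf m j ↔ i = j := by
    constructor
    · intro h; apply Fin.ext
      have := congrArg Fin.val h; simpa [shf] using this
    · intro h; rw [h]
  rw [if_congr this rfl rfl]

lemma psi_mul (m : ℕ) (hm : 1 ≤ m) (i j : Fin (2 ^ m - 1)) :
    ∑ k : Fin (2 ^ m - 1), PsiM m i k * PsiM m k j =
      (2:ℝ)^m * (1 + if i = j then 1 else 0) := by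
  have expand : ∀ k, PsiM m i k * PsiM m k j =
      1 - hadCore m i k - hadCore m k j + hadCore m k i * hadCore m k j := by
    intro k
    simp only [PsiM, Matrix.of_apply]
    rw [hadCore_apply m i k, sylvester_symm, ← hadCore_apply m k i]
    ring
  rw [Finset.sum_congr rfl (fun k _ => expand k)]
  rw [Finset.sum_add_distrib, Finset.sum_sub_distrib, Finset.sum_sub_distrib,
    core_rowsum m hm i, core_colsum m hm j, core_ortho m hm i j,
    Finset.sum_const, nsmul_eq_mul, mul_one, ← Fintype.card, card_real m hm]
  by_cases h : i = j <;> simp [h] <;> ring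


lemma chebyshev_term (S x y : ℝ) (hS : 0 < S) :
    (x - y) * (Real.exp (-(S*x)) - Real.exp (-(S*y))) ≤ 0 ∧
    ((x - y) * (Real.exp (-(S*x)) - Real.exp (-(S*y))) = 0 ↔ x = y) := by
  rcases lt_trichotomy x y with h | h | h
  · have he : Real.exp (-(S*y)) < Real.exp (-(S*x)) := by
      apply Real.exp_lt_exp.mpr; nlinarith
    exact ⟨by nlinarith, ⟨fun hz => by exfalso; nlinarith, fun hz => by rw [hz]; ring⟩⟩
  · exact ⟨by rw [h]; simp, ⟨fun _ => h, fun hz => by rw [hz]; ring⟩⟩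
  · have he : Real.exp (-(S*x)) < Real.exp (-(S*y)) := by
      apply Real.exp_lt_exp.mpr; nlinarith
    exact ⟨by nlinarith, ⟨fun hz => by exfalso; nlinarith, fun hz => by rw [hz]; ring⟩⟩

theorem main_ineq (m : ℕ) (hm : 1 ≤ m) (a : Fin (2 ^ m - 1) → ℝ) (ha : ∀ i, 0 < a i) :
    ((2 : ℝ) ^ m - 1) * bbar m a ≤ ∑ i, bVec m a i ∧
    (((2 : ℝ) ^ m - 1) * bbar m a = ∑ i, bVec m a i ↔ ∃ c : ℝ, ∀ i, a i = c) := by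
  have hKpos : (0:ℝ) < 2 ^ m := by positivity
  have hn2 : (2:ℝ) ≤ 2 ^ m := by
    calc (2:ℝ) = 2 ^ 1 := by norm_num
    _ ≤ 2 ^ m := by apply pow_le_pow_right₀ (by norm_num) hm
  set K : ℝ := (2:ℝ)^m with hK
  set n : ℝ := K - 1 with hn
  have hnpos : 0 < n := by rw [hn]; linarith
  set S : ℝ := ∑ k, a k with hSdef
  have hcard : (Fintype.card (Fin (2 ^ m - 1)) : ℝ) = n := card_real m hm
  have hne : Nonempty (Fin (2 ^ m - 1)) := by
    have : 0 < Fintype.card (Fin (2 ^ m - 1)) := by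
      have : (0:ℝ) < (Fintype.card (Fin (2 ^ m - 1)) : ℝ) := by rw [hcard]; exact hnpos
      exact_mod_cast this
    exact Fintype.card_pos_iff.mp this
  have hS : 0 < S := Finset.sum_pos (fun i _ => ha i) univ_nonempty
  set v : Fin (2 ^ m - 1) → ℝ := fun j => ∑ l, PsiM m j l * (a l / S) with hv
  have hmulVec : ∀ j, (PsiM m).mulVec a j = S * v j := by
    intro j
    rw [hv]
    simp only [Matrix.mulVec, dotProduct, Finset.mul_sum]
    apply Finset.sum_congr rfl
    intro l _
    field_simp
  have hhat : ∑ l, a l / S = 1 := by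
    rw [← Finset.sum_div, ← hSdef]; field_simp
  have hvsum : ∑ j, v j = K := by
    rw [hv]
    rw [Finset.sum_comm]
    have : ∀ l, ∑ j, PsiM m j l * (a l / S) = K * (a l / S) := by
      intro l
      rw [← Finset.sum_mul, psi_colsum m hm l]
    rw [Finset.sum_congr rfl (fun l _ => this l), ← Finset.mul_sum, hhat, mul_one]
  set E : Fin (2 ^ m - 1) → ℝ := fun j => Real.exp (-(S * v j)) with hE
  have hbVec : ∀ i, bVec m a i = ∑ j, PsiM m i j * E j := by
    intro i
    apply Finset.sum_congr rfl
    intro j _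
    rw [hmulVec j]
  have hsumb : ∑ i, bVec m a i = K * ∑ j, E j := by
    rw [Finset.sum_congr rfl (fun i _ => hbVec i), Finset.sum_comm, Finset.mul_sum]
    apply Finset.sum_congr rfl
    intro j _
    rw [← Finset.sum_mul, psi_colsum m hm j]
  have hbbar : bbar m a = ∑ j, v j * E j := by
    rw [bbar, ← hSdef]
    have h1 : ∀ i, (a i / S) * bVec m a i = ∑ j, (a i / S) * (PsiM m i j * E j) :=
      fun i => by rw [hbVec i, Finset.mul_sum]
    rw [Finset.sum_congr rfl (fun i _ => h1 i), Finset.sum_comm]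
    apply Finset.sum_congr rfl
    intro j _
    have hvj : v j = ∑ x, PsiM m x j * (a x / S) := by
      simp only [hv]
      exact Finset.sum_congr rfl (fun x _ => by rw [psi_symm])
    rw [hvj, Finset.sum_mul]
    exact Finset.sum_congr rfl (fun x _ => by ring)
  -- the difference
  set vb : ℝ := K / n with hvb
  have hterm : ∀ j, (v j - vb) * (E j - Real.exp (-(S * vb))) ≤ 0 ∧
      ((v j - vb) * (E j - Real.exp (-(S * vb))) = 0 ↔ v j = vb) := by
    intro j
    exact chebyshev_term S (v j) vb hS
  have hsum0 : ∑ j, (v j - vb) = 0 := by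
    rw [Finset.sum_sub_distrib, hvsum, Finset.sum_const, nsmul_eq_mul, ← Fintype.card, hcard]
    rw [hvb]; field_simp; ring
  have hdiff : (∑ i, bVec m a i) - n * bbar m a
      = -(n * ∑ j, (v j - vb) * (E j - Real.exp (-(S * vb)))) := by
    have expand : ∑ j, (v j - vb) * (E j - Real.exp (-(S * vb)))
        = (∑ j, v j * E j) - vb * (∑ j, E j) - Real.exp (-(S * vb)) * (∑ j, (v j - vb)) := by
      rw [Finset.mul_sum, Finset.mul_sum, ← Finset.sum_sub_distrib, ← Finset.sum_sub_distrib]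
      exact Finset.sum_congr rfl (fun j _ => by ring)
    rw [expand, hsum0, mul_zero, sub_zero, hsumb, hbbar, hvb]
    field_simp
    ring
  have hsumle : ∑ j, (v j - vb) * (E j - Real.exp (-(S * vb))) ≤ 0 :=
    Finset.sum_nonpos (fun j _ => (hterm j).1)
  constructor
  · nlinarith [hsumle]
  · constructor
    · intro heq
      have hz : ∑ j, (v j - vb) * (E j - Real.exp (-(S * vb))) = 0 := by
        have h0 : (∑ i, bVec m a i) - n * bbar m a = 0 := by rw [← heq]; ring
        rw [hdiff] at h0
        have h1 := neg_eq_zero.mp h0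
        rcases mul_eq_zero.mp h1 with h | h
        · exact absurd h (ne_of_gt hnpos)
        · exact h
      have hveq : ∀ j, v j = vb := by
        intro j
        have h2 := (Finset.sum_eq_zero_iff_of_nonpos (fun j _ => (hterm j).1)).mp hz j (mem_univ j)
        exact ((hterm j).2).mp h2
      -- deduce a constant
      refine ⟨S / n, fun i => ?_⟩
      have key : ∑ k, PsiM m i k * v k = K * (1 + a i / S) := by
        have h1 : ∀ k, PsiM m i k * v k = ∑ l, PsiM m i k * PsiM m k l * (a l / S) := by
          intro k
          simp only [hv, Finset.mul_sum]
          exact Finset.sum_congr rfl (fun l _ => by ring)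
        rw [Finset.sum_congr rfl (fun k _ => h1 k), Finset.sum_comm]
        have h2 : ∀ l, ∑ k, PsiM m i k * PsiM m k l * (a l / S)
            = K * (1 + if i = l then 1 else 0) * (a l / S) := by
          intro l
          rw [← Finset.sum_mul, psi_mul m hm i l]
        rw [Finset.sum_congr rfl (fun l _ => h2 l)]
        have h3 : ∀ l, K * (1 + if i = l then 1 else 0) * (a l / S)
            = K * (a l / S) + K * (if i = l then 1 else 0) * (a l / S) := by
          intro l; ring
        rw [Finset.sum_congr rfl (fun l _ => h3 l), Finset.sum_add_distrib, ← Finset.mul_sum, hhat]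
        have h4 : ∑ l, K * (if i = l then 1 else 0) * (a l / S) = K * (a i / S) := by
          rw [Finset.sum_eq_single i]
          · simp
          · intro l _ hli
            rw [if_neg (fun h => hli h.symm)]
            ring
          · intro h; exact absurd (mem_univ i) h
        rw [h4]
        ring
      have key2 : ∑ k, PsiM m i k * v k = K * vb := by
        rw [Finset.sum_congr rfl (fun k _ => by rw [hveq k]), ← Finset.sum_mul, psi_rowsum m hm i]
      rw [key] at key2
      have h5 : 1 + a i / S = K / n := mul_left_cancel₀ (ne_of_gt hKpos) (by rw [key2, hvb])
      have h6 : a i / S = K / n - 1 := by linarith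
      have h7 : K / n - 1 = 1 / n := by
        rw [hn, div_sub_one (show K - 1 ≠ 0 by linarith)]; ring
      rw [h7] at h6
      calc a i = S * (a i / S) := by field_simp
      _ = S * (1 / n) := by rw [h6]
      _ = S / n := by ring
    · intro ⟨c, hc⟩
      have hcpos : 0 < c := by rw [← hc (Classical.arbitrary _)]; exact ha _
      have hSc : S = n * c := by
        rw [hSdef, Finset.sum_congr rfl (fun k _ => hc k), Finset.sum_const, nsmul_eq_mul,
          ← Fintype.card, hcard]
      have hveq : ∀ j, v j = vb := by
        intro j
        simp only [hv, hvb]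
        have hratio : ∀ l, a l / S = 1 / n := by
          intro l
          rw [hc l, hSc]
          rw [div_eq_div_iff (by positivity) hnpos.ne']
          ring
        have hsum : ∑ l, PsiM m j l * (a l / S) = ∑ l, PsiM m j l * (1 / n) :=
          Finset.sum_congr rfl (fun l _ => by rw [hratio l])
        rw [hsum, ← Finset.sum_mul, psi_rowsum m hm j]
        ring
      have hz2 : ∑ j, (v j - vb) * (E j - Real.exp (-(S * vb))) = 0 :=
        Finset.sum_eq_zero (fun j _ => by rw [hveq j]; ring)
      rw [hz2, mul_zero, neg_zero] at hdiff
      linarith [hdiff]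


lemma Dden_pos (m : ℕ) (b : Fin (2 ^ m - 1) → ℝ) : 0 < Dden m b := by
  have h : 0 ≤ ∑ j, Real.exp (-((PsiM m).mulVec b j)) :=
    Finset.sum_nonneg (fun j _ => le_of_lt (Real.exp_pos _))
  rw [Dden]; linarith

theorem flow_pos (m : ℕ) (a : ℝ → Fin (2 ^ m - 1) → ℝ)
    (hderiv : ∀ t ≥ (0 : ℝ), ∀ i, HasDerivAt (fun s => a s i)
        (a t i * bVec m (a t) i / Dden m (a t)) t)
    (hpos0 : ∀ i, 0 < a 0 i) :
    ∀ t ≥ (0:ℝ), ∀ i, 0 < a t i := by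
  intro T hT i
  have hc_a : ∀ j, ContinuousOn (fun s => a s j) (Set.Ici 0) :=
    fun j t ht => ((hderiv t ht j).continuousAt).continuousWithinAt
  have hc_mv : ∀ j, ContinuousOn (fun s => (PsiM m).mulVec (a s) j) (Set.Ici 0) := by
    intro j
    have heq : (fun s => (PsiM m).mulVec (a s) j) = fun s => ∑ l, PsiM m j l * a s l := by
      funext s; simp [Matrix.mulVec, dotProduct]
    rw [heq]
    exact continuousOn_finset_sum _ (fun l _ => continuousOn_const.mul (hc_a l))
  have hc_b : ContinuousOn (fun s => bVec m (a s) i) (Set.Ici 0) := by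
    have heq : (fun s => bVec m (a s) i)
        = fun s => ∑ j, PsiM m i j * Real.exp (-((PsiM m).mulVec (a s) j)) := rfl
    rw [heq]
    exact continuousOn_finset_sum _ (fun j _ =>
      continuousOn_const.mul (Real.continuous_exp.comp_continuousOn (hc_mv j).neg))
  have hc_D : ContinuousOn (fun s => Dden m (a s)) (Set.Ici 0) := by
    have heq : (fun s => Dden m (a s))
        = fun s => 1 + ∑ j, Real.exp (-((PsiM m).mulVec (a s) j)) := rfl
    rw [heq]
    exact continuousOn_const.add (continuousOn_finset_sum _ (fun j _ =>
      Real.continuous_exp.comp_continuousOn (hc_mv j).neg))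
  set g : ℝ → ℝ := fun s => bVec m (a s) i / Dden m (a s) with hg
  have hc_g : ContinuousOn g (Set.Ici 0) :=
    hc_b.div hc_D (fun s _ => (Dden_pos m (a s)).ne')
  set gt : ℝ → ℝ := fun s => g (max s 0) with hgt
  have hc_gt : Continuous gt :=
    hc_g.comp_continuous (continuous_id.max continuous_const) (fun x => Set.mem_Ici.mpr (le_max_right _ _))
  set F : ℝ → ℝ := fun u => ∫ s in (0:ℝ)..u, gt s with hF
  have hF' : ∀ u, HasDerivAt F (gt u) u :=
    fun u => (hc_gt.integral_hasStrictDerivAt 0 u).hasDerivAt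
  have hFc : Continuous F := by
    apply continuous_iff_continuousAt.mpr
    exact fun u => (hF' u).continuousAt
  set h : ℝ → ℝ := fun u => a u i * Real.exp (-F u) with hh
  have hzero : ∀ x ∈ Set.Ico (0:ℝ) T, HasDerivWithinAt h 0 (Set.Ici x) x := by
    intro x hx
    have hx0 : (0:ℝ) ≤ x := hx.1
    have h1 := (hderiv x hx0 i).mul (((hF' x).neg).exp)
    have hmax : max x 0 = x := max_eq_left hx0
    have hval : a x i * bVec m (a x) i / Dden m (a x) * Real.exp (-F x)
        + a x i * (Real.exp (-F x) * -(gt x)) = 0 := by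
      simp only [hgt, hmax, hg]
      ring
    rw [Pi.neg_apply, hval] at h1
    exact h1.hasDerivWithinAt
  have hcont : ContinuousOn h (Set.Icc 0 T) := by
    apply ContinuousOn.mul
    · exact (hc_a i).mono Set.Icc_subset_Ici_self
    · exact (Real.continuous_exp.comp hFc.neg).continuousOn
  have heq := constant_of_has_deriv_right_zero hcont hzero T (Set.mem_Icc.mpr ⟨hT, le_refl T⟩)
  have hF0 : F 0 = 0 := intervalIntegral.integral_same
  rw [hh] at heq
  simp only [hF0, neg_zero, Real.exp_zero, mul_one] at heq
  have he := Real.exp_pos (-F T)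
  nlinarith [hpos0 i, heq, he]

theorem flow_deriv (m : ℕ) (hm : 1 ≤ m) (a : ℝ → Fin (2 ^ m - 1) → ℝ)
    (hderiv : ∀ t ≥ (0 : ℝ), ∀ i, HasDerivAt (fun s => a s i)
        (a t i * bVec m (a t) i / Dden m (a t)) t)
    (hpos0 : ∀ i, 0 < a 0 i) :
    ∀ t ≥ (0 : ℝ), ∃ d : ℝ,
      HasDerivAt (fun s => klUnif m (a s)) d t ∧ d ≤ 0 ∧
      (d = 0 ↔ ∀ i, a t i / (∑ j, a t j) = 1 / ((2 : ℝ) ^ m - 1)) := by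
  intro t ht
  have hpos : ∀ i, 0 < a t i := flow_pos m a hderiv hpos0 t ht
  set n : ℝ := (2:ℝ)^m - 1 with hn
  have hnpos : 0 < n := by
    rw [hn]
    have : (2:ℝ) ≤ 2^m := by
      calc (2:ℝ) = 2 ^ 1 := by norm_num
      _ ≤ 2 ^ m := by apply pow_le_pow_right₀ (by norm_num) hm
    linarith
  have hcard : (Fintype.card (Fin (2 ^ m - 1)) : ℝ) = n := card_real m hm
  have hne : Nonempty (Fin (2 ^ m - 1)) := by
    have : 0 < Fintype.card (Fin (2 ^ m - 1)) := by
      have : (0:ℝ) < (Fintype.card (Fin (2 ^ m - 1)) : ℝ) := by rw [hcard]; exact hnpos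
      exact_mod_cast this
    exact Fintype.card_pos_iff.mp this
  set S : ℝ := ∑ j, a t j with hS
  have hSpos : 0 < S := Finset.sum_pos (fun i _ => hpos i) univ_nonempty
  set D : ℝ := Dden m (a t) with hD
  have hDpos : 0 < D := Dden_pos m (a t)
  set Sd : ℝ := ∑ j, a t j * bVec m (a t) j / D with hSd
  have hSderiv : HasDerivAt (fun s => ∑ j, a s j) Sd t :=
    HasDerivAt.fun_sum (fun j _ => hderiv t ht j)
  -- per-coordinate log derivative
  have hlog : ∀ i : Fin (2 ^ m - 1), HasDerivAt (fun s => Real.log (a s i / ∑ j, a s j))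
      ((((a t i * bVec m (a t) i / D) * S - a t i * Sd) / S ^ 2) / (a t i / S)) t := by
    intro i
    have hq := (hderiv t ht i).div hSderiv (ne_of_gt hSpos)
    exact hq.log (div_pos (hpos i) hSpos).ne'
  have hsumlog := HasDerivAt.fun_sum (fun i (_ : i ∈ (univ : Finset (Fin (2 ^ m - 1)))) => hlog i)
  have hkl : HasDerivAt (fun s => klUnif m (a s))
      (0 - (1 / n) * ∑ i, (((a t i * bVec m (a t) i / D) * S - a t i * Sd) / S ^ 2) / (a t i / S)) t := by
    have h1 := hsumlog.const_mul (1 / n)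
    have h2 := (hasDerivAt_const t (-Real.log n)).sub h1
    have hfun : (fun s => klUnif m (a s))
        = fun s => -Real.log n - (1 / n) * ∑ i, Real.log (a s i / ∑ j, a s j) := by
      funext s
      rw [hn]
      simp only [klUnif]
    rw [hfun]
    exact h2
  -- simplify the derivative value
  have hterm : ∀ i : Fin (2 ^ m - 1),
      (((a t i * bVec m (a t) i / D) * S - a t i * Sd) / S ^ 2) / (a t i / S)
        = bVec m (a t) i / D - Sd / S := by
    intro i
    have hai := (hpos i).ne'
    field_simp
  have hSdval : Sd = S * bbar m (a t) / D := by
    rw [hSd, bbar, ← hS, Finset.mul_sum, Finset.sum_div]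
    apply Finset.sum_congr rfl
    intro j _
    field_simp
  have hmsum : ∑ i, (((a t i * bVec m (a t) i / D) * S - a t i * Sd) / S ^ 2) / (a t i / S)
      = ((∑ i, bVec m (a t) i) - n * bbar m (a t)) / D := by
    rw [Finset.sum_congr rfl (fun i _ => hterm i), Finset.sum_sub_distrib, Finset.sum_const,
      nsmul_eq_mul, ← Fintype.card, hcard, hSdval, ← Finset.sum_div]
    have hS0 := hSpos.ne'
    have hD0 := hDpos.ne'
    field_simp
  have hMI := main_ineq m hm (a t) hpos
  refine ⟨_, hkl, ?_, ?_⟩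
  · rw [hmsum]
    have h1 : 0 ≤ (∑ i, bVec m (a t) i) - n * bbar m (a t) := by
      have := hMI.1; rw [← hn] at this; linarith
    have h2 : 0 ≤ ((∑ i, bVec m (a t) i) - n * bbar m (a t)) / D := by positivity
    nlinarith [mul_nonneg (le_of_lt (by positivity : (0:ℝ) < 1/n)) h2]
  · rw [hmsum]
    constructor
    · intro hd
      have hnum : (∑ i, bVec m (a t) i) - n * bbar m (a t) = 0 := by
        have h4 : (1/n) * (((∑ i, bVec m (a t) i) - n * bbar m (a t)) / D) = 0 := by
          linarith [hd]
        rcases mul_eq_zero.mp h4 with h | h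
        · exact absurd h (by positivity)
        · rcases div_eq_zero_iff.mp h with h' | h'
          · exact h'
          · exact absurd h' hDpos.ne'
      have hex : ∃ c : ℝ, ∀ i, a t i = c := by
        apply (hMI.2).mp
        rw [← hn]
        linarith
      obtain ⟨c, hc⟩ := hex
      intro i
      have hcpos : 0 < c := by rw [← hc (Classical.arbitrary _)]; exact hpos _
      have hSc : S = n * c := by
        rw [hS, Finset.sum_congr rfl (fun k _ => hc k), Finset.sum_const, nsmul_eq_mul,
          ← Fintype.card, hcard]
      rw [hc i, hSc, div_eq_div_iff (by positivity) hnpos.ne']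
      ring
    · intro hall
      have hex : ∃ c : ℝ, ∀ i, a t i = c := by
        refine ⟨S / n, fun i => ?_⟩
        have h5 := hall i
        calc a t i = S * (a t i / S) := by field_simp
        _ = S * (1 / n) := by rw [h5]
        _ = S / n := by ring
      have heq := (hMI.2).mpr hex
      rw [← hn] at heq
      rw [show (∑ i, bVec m (a t) i) - n * bbar m (a t) = 0 by linarith, zero_div,
        mul_zero, sub_zero]

/-- the key inequality behind the Lyapunov property of the KL divergence.
For every `a` with positive entries, `(K−1)·b̄(a) ≤ Σ_i b_i(a)`, with equality iff `a ∝ 1`.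
Consequently, along any solution of the reduced cross-entropy gradient flow with positive
initialization, `D_KL((1/(K−1))·1 ‖ â(t))` has nonpositive time derivative, vanishing only
when `â(t) = (1/(K−1))·1`. -/
theorem kl_divergence_derivative_nonpos (m : ℕ) (hm : 1 ≤ m) :
    (∀ a : Fin (2 ^ m - 1) → ℝ, (∀ i, 0 < a i) →
      (((2 : ℝ) ^ m - 1) * bbar m a ≤ ∑ i, bVec m a i ∧
       (((2 : ℝ) ^ m - 1) * bbar m a = ∑ i, bVec m a i ↔ ∃ c : ℝ, ∀ i, a i = c))) ∧
    (∀ a : ℝ → Fin (2 ^ m - 1) → ℝ,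
      (∀ t ≥ (0 : ℝ), ∀ i, HasDerivAt (fun s => a s i)
          (a t i * bVec m (a t) i / Dden m (a t)) t) →
      (∀ i, 0 < a 0 i) →
      ∀ t ≥ (0 : ℝ), ∃ d : ℝ,
        HasDerivAt (fun s => klUnif m (a s)) d t ∧ d ≤ 0 ∧
        (d = 0 ↔ ∀ i, a t i / (∑ j, a t j) = 1 / ((2 : ℝ) ^ m - 1))) := by
  exact ⟨fun a ha => main_ineq m hm a ha,
    fun a hd hp t ht => flow_deriv m hm a hd hp t ht⟩
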